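/- Let Ω be a finite set and let G ≤ Sym(Ω) be a 3/2-transitive permutation group. Then G is either primitive or a Frobenius group. -/

import Mathlib

section Prelude

variable {Ω : Type*}

/-- `G` is transitive on `Ω`. -/
def IsTransSub (G : Subgroup (Equiv.Perm Ω)) : Prop :=
  ∀ a b : Ω, ∃ g ∈ G, g a = b

/-- The orbit of `β` under the stabilizer of `α` in `G`. -/
def stabOrbit (G : Subgroup (Equiv.Perm Ω)) (α β : Ω) : Set Ω :=
  {γ : Ω | ∃ g ∈ G, g α = α ∧ g β = γ}

/-- `G` is `3/2`-transitive: transitive, and all orbits of a point stabilizer `G_α`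
on `Ω \ {α}` have the same size `m > 1`. -/
def IsThreeHalvesTrans (G : Subgroup (Equiv.Perm Ω)) : Prop :=
  IsTransSub G ∧ ∃ m : ℕ, 1 < m ∧ ∀ α β : Ω, β ≠ α → (stabOrbit G α β).ncard = m

/-- `G` is `2`-transitive. -/
def IsTwoTrans (G : Subgroup (Equiv.Perm Ω)) : Prop :=
  ∀ a b c d : Ω, a ≠ b → c ≠ d → ∃ g ∈ G, g a = c ∧ g b = d

/-- The partition (equivalence relation) `r` is preserved by `G`. -/
def IsGInvariantSetoid (G : Subgroup (Equiv.Perm Ω)) (r : Setoid Ω) : Prop :=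
  ∀ g ∈ G, ∀ a b : Ω, r a b → r (g a) (g b)

/-- `G` is primitive: transitive and the only `G`-invariant partitions of `Ω` are
the partition into singletons (`⊥`) and the one-class partition (`⊤`). -/
def IsPrimitiveSub (G : Subgroup (Equiv.Perm Ω)) : Prop :=
  IsTransSub G ∧ ∀ r : Setoid Ω, IsGInvariantSetoid G r → r = ⊥ ∨ r = ⊤

/-- `G` is a Frobenius group: transitive, point stabilizers are nontrivial, and
two-point stabilizers are trivial. -/
def IsFrobeniusSub (G : Subgroup (Equiv.Perm Ω)) : Prop :=
  IsTransSub G ∧ (∀ α : Ω, ∃ g ∈ G, g ≠ 1 ∧ g α = α) ∧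
    (∀ g ∈ G, ∀ α β : Ω, α ≠ β → g α = α → g β = β → g = 1)

/-- The `k`-closure of `G`: all permutations `σ` such that for every `k`-tuple `v`
there is `g ∈ G` agreeing with `σ` on `v`; it is the largest subgroup of `Sym(Ω)`
with the same orbits as `G` on `Ω^k`. -/
def kClosure (G : Subgroup (Equiv.Perm Ω)) (k : ℕ) : Subgroup (Equiv.Perm Ω) where
  carrier := {σ : Equiv.Perm Ω | ∀ v : Fin k → Ω, ∃ g ∈ G, ∀ i, σ (v i) = g (v i)}
  one_mem' := fun v => ⟨1, G.one_mem, fun _ => rfl⟩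
  mul_mem' := by
    intro a b ha hb v
    obtain ⟨g, hg, hgv⟩ := hb v
    obtain ⟨h, hh, hhv⟩ := ha fun i => b (v i)
    refine ⟨h * g, G.mul_mem hh hg, fun i => ?_⟩
    simp only [Equiv.Perm.mul_apply]
    rw [hhv i, hgv i]
  inv_mem' := by
    intro a ha v
    obtain ⟨g, hg, hgv⟩ := ha fun i => a⁻¹ (v i)
    refine ⟨g⁻¹, G.inv_mem hg, fun i => ?_⟩
    have h := hgv i
    rw [show a (a⁻¹ (v i)) = v i from by simp] at h
    calc a⁻¹ (v i) = g⁻¹ (g (a⁻¹ (v i))) := by simp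
    _ = g⁻¹ (v i) := by rw [← h]

/-- `G` is an affine permutation group: it has a normal subgroup `V` which is an
elementary abelian `p`-group acting regularly on `Ω`. -/
def IsAffineSub (G : Subgroup (Equiv.Perm Ω)) : Prop :=
  ∃ p : ℕ, p.Prime ∧ ∃ V : Subgroup (Equiv.Perm Ω), V ≤ G ∧
    (∀ g ∈ G, ∀ v ∈ V, g * v * g⁻¹ ∈ V) ∧
    (∀ v ∈ V, ∀ w ∈ V, v * w = w * v) ∧
    (∀ v ∈ V, v ^ p = 1) ∧
    (∀ a b : Ω, ∃! v : Equiv.Perm Ω, v ∈ V ∧ v a = b)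

/-- `G` is almost simple: it has a nonabelian simple normal subgroup `S` whose
centralizer in `G` is trivial. -/
def IsAlmostSimpleSub (G : Subgroup (Equiv.Perm Ω)) : Prop :=
  ∃ S : Subgroup (Equiv.Perm Ω), S ≤ G ∧
    (∀ g ∈ G, ∀ s ∈ S, g * s * g⁻¹ ∈ S) ∧
    IsSimpleGroup S ∧ (∃ s ∈ S, ∃ t ∈ S, s * t ≠ t * s) ∧
    (∀ g ∈ G, (∀ s ∈ S, g * s = s * g) → g = 1)

/-- The conjugation homomorphism `Sym(α) → Sym(β)` induced by a bijection `e : α ≃ β`. -/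
def permConjHom {α β : Type*} (e : α ≃ β) : Equiv.Perm α →* Equiv.Perm β where
  toFun σ := e.permCongr σ
  map_one' := by ext x; simp
  map_mul' σ τ := by
    ext x
    simp [Equiv.Perm.mul_apply]

/-- The conjugate of `G ≤ Sym(α)` under a bijection `e : α ≃ β`. -/
def conjGroup {α β : Type*} (e : α ≃ β) (G : Subgroup (Equiv.Perm α)) :
    Subgroup (Equiv.Perm β) :=
  G.map (permConjHom e)

/-- The affine semilinear group `AΓL(1, p^d)` over a field `F` (of order `p^d`),
as a set of permutations: all maps `x ↦ a * x^(p^i) + b` with `a ≠ 0`, `0 ≤ i < d`. -/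
def AGammaL1Set (F : Type*) [Field F] (p d : ℕ) : Set (Equiv.Perm F) :=
  {σ : Equiv.Perm F | ∃ (a b : F) (i : ℕ), a ≠ 0 ∧ i < d ∧ ∀ x : F, σ x = a * x ^ p ^ i + b}

/-- The Passman group `AS₀` over a field `F` (of order `p^(d/2)`) with respect to
a generator `θ` of `Fˣ`: the subgroup of `Sym(F × F)` generated by all translations
together with `(x,y) ↦ (θx, θ⁻¹y)`, `(x,y) ↦ (-x, y)` and `(x,y) ↦ (y, x)`. -/
def PassmanGroup (F : Type*) [Field F] (θ : Fˣ) : Subgroup (Equiv.Perm (F × F)) :=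
  Subgroup.closure
    ({σ : Equiv.Perm (F × F) | ∃ u v : F, σ = (Equiv.addRight u).prodCongr (Equiv.addRight v)} ∪
      {(Equiv.mulLeft₀ (θ : F) θ.ne_zero).prodCongr
          (Equiv.mulLeft₀ ((θ⁻¹ : Fˣ) : F) θ⁻¹.ne_zero),
        (Equiv.neg F).prodCongr (Equiv.refl F),
        Equiv.prodComm F F})

/-- The socle of a group: the subgroup generated by all minimal normal subgroups. -/
def groupSocle (H : Type*) [Group H] : Subgroup H :=
  sSup {N : Subgroup H | N.Normal ∧ N ≠ ⊥ ∧
    ∀ M : Subgroup H, M.Normal → M ≠ ⊥ → M ≤ N → M = N}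

end Prelude
section WielandtAux

variable {Ω : Type*}

private lemma winv_fix {g : Equiv.Perm Ω} {a b : Ω} (h : g a = b) : g⁻¹ b = a := by
  rw [← h, ← Equiv.Perm.mul_apply, inv_mul_cancel, Equiv.Perm.one_apply]

private lemma wstabOrbit_self (G : Subgroup (Equiv.Perm Ω)) (α β : Ω) : β ∈ stabOrbit G α β :=
  ⟨1, G.one_mem, rfl, rfl⟩

private lemma wstabOrbit_apply_mem {G : Subgroup (Equiv.Perm Ω)} {α β γ : Ω} {g : Equiv.Perm Ω}
    (hg : g ∈ G) (hgα : g α = α) (h : γ ∈ stabOrbit G α β) : g γ ∈ stabOrbit G α β := by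
  obtain ⟨h', hh', hα, hβ⟩ := h
  refine ⟨g * h', G.mul_mem hg hh', ?_, ?_⟩
  · simp [Equiv.Perm.mul_apply, hα, hgα]
  · simp [Equiv.Perm.mul_apply, hβ]

private lemma wstabOrbit_eq_of_mem {G : Subgroup (Equiv.Perm Ω)} {α β γ : Ω}
    (h : γ ∈ stabOrbit G α β) : stabOrbit G α γ = stabOrbit G α β := by
  obtain ⟨g, hg, hgα, hgβ⟩ := h
  have hginv : g⁻¹ α = α := winv_fix hgα
  have hginvγ : g⁻¹ γ = β := winv_fix hgβ
  ext δ
  constructor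
  · rintro ⟨h', hh', hα, hγ⟩
    refine ⟨h' * g, mul_mem hh' hg, ?_, ?_⟩
    · simp [Equiv.Perm.mul_apply, hgα, hα]
    · simp [Equiv.Perm.mul_apply, hgβ, hγ]
  · rintro ⟨h', hh', hα, hβ'⟩
    refine ⟨h' * g⁻¹, mul_mem hh' (inv_mem hg), ?_, ?_⟩
    · simp [Equiv.Perm.mul_apply, hginv, hα]
    · simp [Equiv.Perm.mul_apply, hginvγ, hβ']

/-- A finite set which is a union of `G_α`-orbits of size `m` has size divisible by `m`. -/
private lemma wdvd_ncard_of_orbits [Fintype Ω] (G : Subgroup (Equiv.Perm Ω)) (α : Ω) (m : ℕ)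
    (n : ℕ) : ∀ S : Set Ω, S.ncard = n → (∀ β ∈ S, stabOrbit G α β ⊆ S) →
      (∀ β ∈ S, (stabOrbit G α β).ncard = m) → m ∣ n := by
  induction n using Nat.strong_induction_on with
  | _ n ih =>
    intro S hn hsub hcard
    rcases S.eq_empty_or_nonempty with rfl | ⟨β, hβ⟩
    · simp only [Set.ncard_empty] at hn
      exact hn ▸ dvd_zero m
    · have hΓS : stabOrbit G α β ⊆ S := hsub β hβ
      have hΓm : (stabOrbit G α β).ncard = m := hcard β hβ
      have hmpos : 0 < m := by
        rw [← hΓm]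
        exact (Set.ncard_pos (Set.toFinite _)).mpr ⟨β, wstabOrbit_self G α β⟩
      have hdiff : (S \ stabOrbit G α β).ncard + m = n := by
        rw [← hΓm, ← hn]
        exact Set.ncard_diff_add_ncard_of_subset hΓS (Set.toFinite S)
      have hlt : (S \ stabOrbit G α β).ncard < n := by omega
      have hdvd : m ∣ (S \ stabOrbit G α β).ncard := by
        refine ih _ hlt (S \ stabOrbit G α β) rfl ?_ ?_
        · rintro β' ⟨hβ'S, hβ'Γ⟩ γ hγ
          refine ⟨hsub β' hβ'S hγ, fun hγΓ => hβ'Γ ?_⟩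
          have h1 : stabOrbit G α γ = stabOrbit G α β' := wstabOrbit_eq_of_mem hγ
          have h2 : stabOrbit G α γ = stabOrbit G α β := wstabOrbit_eq_of_mem hγΓ
          rw [← h2, h1]
          exact wstabOrbit_self G α β'
        · exact fun β' hβ' => hcard β' hβ'.1
      rw [← hdiff]
      exact dvd_add hdvd dvd_rfl

/-- Fiber counting: if all fibers of `f` over the image of `S` have size `k`,
then `S.ncard = (f '' S).ncard * k`. -/
private lemma wncard_eq_image_mul {A B : Type*} [Finite A] (f : A → B) (k : ℕ) (n : ℕ) :
    ∀ S : Set A, (f '' S).ncard = n →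
      (∀ b ∈ f '' S, ({a ∈ S | f a = b} : Set A).ncard = k) → S.ncard = n * k := by
  induction n using Nat.strong_induction_on with
  | _ n ih =>
    intro S himg hfib
    rcases S.eq_empty_or_nonempty with rfl | ⟨a, ha⟩
    · simp only [Set.image_empty, Set.ncard_empty] at himg
      simp [← himg]
    · have hb : f a ∈ f '' S := ⟨a, ha, rfl⟩
      have hnpos : 0 < n := by
        rw [← himg]
        exact (Set.ncard_pos (Set.toFinite _)).mpr ⟨f a, hb⟩
      set S' : Set A := {x ∈ S | f x ≠ f a} with hS'
      have himg' : f '' S' = (f '' S) \ {f a} := by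
        ext c
        constructor
        · rintro ⟨x, ⟨hxS, hxb⟩, rfl⟩
          exact ⟨⟨x, hxS, rfl⟩, hxb⟩
        · rintro ⟨⟨x, hxS, rfl⟩, hcb⟩
          exact ⟨x, ⟨hxS, by simpa using hcb⟩, rfl⟩
      have himgcard : (f '' S').ncard = n - 1 := by
        rw [himg', Set.ncard_diff_singleton_of_mem hb, himg]
      have hSd : S \ S' = {x ∈ S | f x = f a} := by
        ext x
        simp only [hS', Set.mem_diff, Set.mem_setOf_eq, not_and, not_not]
        tauto
      have hsplit : S'.ncard + k = S.ncard := by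
        have h1 := Set.ncard_diff_add_ncard_of_subset
          (show S' ⊆ S from fun x hx => hx.1) (Set.toFinite S)
        rw [hSd, hfib (f a) hb] at h1
        omega
      have hS'card : S'.ncard = (n - 1) * k := by
        refine ih (n - 1) (by omega) S' himgcard ?_
        intro c hc
        have hc' : c ∈ f '' S := himg' ▸ hc |>.1
        have hcb : c ≠ f a := by
          have := (himg' ▸ hc).2
          simpa using this
        rw [← hfib c hc']
        congr 1
        ext x
        simp only [hS', Set.mem_setOf_eq]
        constructor
        · rintro ⟨⟨h1, _⟩, h3⟩; exact ⟨h1, h3⟩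
        · rintro ⟨h1, h3⟩; exact ⟨⟨h1, h3 ▸ hcb⟩, h3⟩
      calc S.ncard = (n - 1) * k + k := by omega
        _ = ((n - 1) + 1) * k := (Nat.succ_mul _ _).symm
        _ = n * k := by rw [Nat.sub_add_cancel hnpos]

section Main

variable [Fintype Ω] {G : Subgroup (Equiv.Perm Ω)} {r : Setoid Ω}

private lemma winv_invariant (hrinv : IsGInvariantSetoid G r) {g : Equiv.Perm Ω} (hg : g ∈ G)
    {a b : Ω} (h : r (g a) (g b)) : r a b := by
  have := hrinv g⁻¹ (inv_mem hg) _ _ h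
  simpa using this

/-- All blocks have the same size. -/
private lemma wblk_ncard_eq (htrans : IsTransSub G) (hrinv : IsGInvariantSetoid G r) (a b : Ω) :
    ({x | r x a} : Set Ω).ncard = ({x | r x b} : Set Ω).ncard := by
  obtain ⟨g, hg, hgab⟩ := htrans a b
  have himg : ({x | r x b} : Set Ω) = (g : Ω → Ω) '' {x | r x a} := by
    ext y
    simp only [Set.mem_setOf_eq, Set.mem_image]
    constructor
    · intro hy
      refine ⟨g⁻¹ y, ?_, by simp⟩
      have : r (g (g⁻¹ y)) (g a) := by
        simpa [hgab] using hy
      exact winv_invariant hrinv hg this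
    · rintro ⟨x, hx, rfl⟩
      have := hrinv g hg _ _ hx
      rwa [hgab] at this
  rw [himg, Set.ncard_image_of_injective _ g.injective]

/-- `m` divides (block size) − 1. -/
private lemma wm_dvd_blk {m : ℕ} (hrinv : IsGInvariantSetoid G r)
    (horb : ∀ α β : Ω, β ≠ α → (stabOrbit G α β).ncard = m) (α : Ω) :
    m ∣ ({x | r x α} : Set Ω).ncard - 1 := by
  have hmem : α ∈ ({x | r x α} : Set Ω) := r.refl α
  have hcard : (({x | r x α} : Set Ω) \ {α}).ncard = ({x | r x α} : Set Ω).ncard - 1 :=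
    Set.ncard_diff_singleton_of_mem hmem
  rw [← hcard]
  refine wdvd_ncard_of_orbits G α m _ _ rfl ?_ ?_
  · rintro β ⟨hβr, hβα⟩ γ ⟨g, hg, hgα, hgβ⟩
    have hβα' : β ≠ α := by simpa using hβα
    constructor
    · show r γ α
      have := hrinv g hg _ _ hβr
      rwa [hgβ, hgα] at this
    · simp only [Set.mem_singleton_iff]
      intro hγα
      exact hβα' (g.injective (by rw [hgβ, hgα, hγα]))
  · rintro β ⟨_, hβα⟩
    exact horb α β (by simpa using hβα)

/-- Key lemma: an orbit of `G_α` outside the block of `α` meets every block in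
at most one point. -/
private lemma wkey (htrans : IsTransSub G) (hrinv : IsGInvariantSetoid G r)
    {m : ℕ} (hm : 1 < m) (horb : ∀ α β : Ω, β ≠ α → (stabOrbit G α β).ncard = m)
    (α β : Ω) (hβ : ¬ r β α) :
    ∀ γ ∈ stabOrbit G α β, ∀ γ' ∈ stabOrbit G α β, r γ γ' → γ = γ' := by
  classical
  have hβα : β ≠ α := fun h => hβ (h ▸ r.refl α)
  set Γ := stabOrbit G α β with hΓdef
  have hΓm : Γ.ncard = m := horb α β hβα
  have hΓnr : ∀ γ ∈ Γ, ¬ r γ α := by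
    rintro γ ⟨g, hg, hgα, hgβ⟩ hrγ
    refine hβ (winv_invariant hrinv hg ?_)
    rwa [hgβ, hgα]
  set Pl : Set Ω := {δ | ∃ γ ∈ Γ, r δ γ} with hPldef
  have hΓPl : Γ ⊆ Pl := fun γ hγ => ⟨γ, hγ, r.refl γ⟩
  have hPlnr : ∀ δ ∈ Pl, ¬ r δ α := by
    rintro δ ⟨γ, hγ, hδγ⟩ h
    exact hΓnr γ hγ (r.trans (r.symm hδγ) h)
  have hinv2 : ∀ δ ∈ Pl \ Γ, stabOrbit G α δ ⊆ Pl \ Γ := by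
    rintro δ ⟨hδPl, hδΓ⟩ ε ⟨g, hg, hgα, hgδ⟩
    constructor
    · obtain ⟨γ, hγ, hδγ⟩ := hδPl
      refine ⟨g γ, wstabOrbit_apply_mem hg hgα hγ, ?_⟩
      rw [← hgδ]
      exact hrinv g hg _ _ hδγ
    · intro hεΓ
      apply hδΓ
      have hginv : g⁻¹ α = α := winv_fix hgα
      have h2 : g⁻¹ ε ∈ Γ := wstabOrbit_apply_mem (inv_mem hg) hginv hεΓ
      rwa [← hgδ, ← Equiv.Perm.mul_apply, inv_mul_cancel, Equiv.Perm.one_apply] at h2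
  have hdvddiff : m ∣ (Pl \ Γ).ncard := by
    refine wdvd_ncard_of_orbits G α m _ _ rfl hinv2 ?_
    rintro δ hδ
    have hδα : δ ≠ α := fun h => hPlnr δ hδ.1 (h ▸ r.refl α)
    exact horb α δ hδα
  have hdvdPl : m ∣ Pl.ncard := by
    have h1 := Set.ncard_diff_add_ncard_of_subset hΓPl (Set.toFinite Pl)
    rw [← h1, hΓm]
    exact dvd_add hdvddiff dvd_rfl
  -- fiber counting over the quotient
  set q : Ω → Quotient r := Quotient.mk r with hqdef
  have hq : ∀ x y : Ω, q x = q y ↔ r x y := fun x y => Quotient.eq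
  set k := ({x | r x α} : Set Ω).ncard with hkdef
  have hkpos : 1 ≤ k := (Set.ncard_pos (Set.toFinite _)).mpr ⟨α, r.refl α⟩
  have hPlcard : Pl.ncard = (q '' Pl).ncard * k := by
    refine wncard_eq_image_mul q k _ Pl rfl ?_
    rintro c ⟨x, hx, rfl⟩
    have hfib : ({a ∈ Pl | q a = q x} : Set Ω) = {y | r y x} := by
      ext y
      simp only [Set.mem_setOf_eq]
      constructor
      · rintro ⟨_, h2⟩
        exact (hq y x).mp h2
      · intro h
        obtain ⟨γ, hγ, hxγ⟩ := hx
        exact ⟨⟨γ, hγ, r.trans h hxγ⟩, (hq y x).mpr h⟩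
    rw [hfib, hkdef]
    exact wblk_ncard_eq htrans hrinv x α
  have himgT : q '' Pl = q '' Γ := by
    apply Set.Subset.antisymm
    · rintro c ⟨x, ⟨γ, hγ, hxγ⟩, rfl⟩
      exact ⟨γ, hγ, ((hq γ x).mpr (r.symm hxγ)).symm ▸ rfl⟩
    · exact Set.image_mono hΓPl
  have ht_le : (q '' Γ).ncard ≤ m := by
    rw [← hΓm]
    exact Set.ncard_image_le (Set.toFinite Γ)
  have ht_dvd : m ∣ (q '' Γ).ncard * k := by
    rw [← himgT, ← hPlcard]
    exact hdvdPl
  have hmk : m ∣ k - 1 := wm_dvd_blk hrinv horb α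
  have hcop : Nat.Coprime m k := by
    have h1 : Nat.gcd m k ∣ k - 1 := (Nat.gcd_dvd_left m k).trans hmk
    have h2 : Nat.gcd m k ∣ k := Nat.gcd_dvd_right m k
    have h3 := Nat.dvd_sub h2 h1
    rw [Nat.sub_sub_self hkpos] at h3
    exact Nat.dvd_one.mp h3
  have hmt : m ∣ (q '' Γ).ncard := hcop.dvd_of_dvd_mul_right ht_dvd
  have htpos : 0 < (q '' Γ).ncard :=
    (Set.ncard_pos (Set.toFinite _)).mpr ⟨q β, β, wstabOrbit_self G α β, rfl⟩
  have htm : (q '' Γ).ncard = m := le_antisymm ht_le (Nat.le_of_dvd htpos hmt)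
  -- conclude injectivity of q on Γ
  intro γ hγ γ' hγ' hrγγ'
  by_contra hne
  have hsub2 : q '' Γ ⊆ q '' (Γ \ {γ}) := by
    rintro c ⟨x, hx, rfl⟩
    by_cases hxγ : x = γ
    · refine ⟨γ', ⟨hγ', fun h => hne ?_⟩, ?_⟩
      · simpa using h.symm
      · rw [hxγ]
        exact ((hq γ' γ).mpr (r.symm hrγγ'))
    · exact ⟨x, ⟨hx, hxγ⟩, rfl⟩
  have hle : (q '' Γ).ncard ≤ (Γ \ {γ}).ncard :=
    le_trans (Set.ncard_le_ncard hsub2 (Set.toFinite _)) (Set.ncard_image_le (Set.toFinite _))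
  rw [Set.ncard_diff_singleton_of_mem hγ, hΓm, htm] at hle
  omega

/-- If `g ∈ G` fixes `α` and `β` in different blocks, it fixes the blocks of `α` and `β`
pointwise. -/
private lemma wfix_blocks (htrans : IsTransSub G) (hrinv : IsGInvariantSetoid G r)
    {m : ℕ} (hm : 1 < m) (horb : ∀ α β : Ω, β ≠ α → (stabOrbit G α β).ncard = m)
    (α β : Ω) (hβ : ¬ r β α) {g : Equiv.Perm Ω} (hg : g ∈ G) (hgα : g α = α) (hgβ : g β = β) :
    ∀ γ : Ω, (r γ α ∨ r γ β) → g γ = γ := by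
  intro γ hγ
  rcases hγ with hγα | hγβ
  · have hγβ' : ¬ r γ β := fun h => hβ (r.trans (r.symm h) hγα)
    have h1 : g γ ∈ stabOrbit G β γ := wstabOrbit_apply_mem hg hgβ (wstabOrbit_self G β γ)
    have h2 : r (g γ) γ := by
      have := hrinv g hg _ _ hγα
      rw [hgα] at this
      exact r.trans this (r.symm hγα)
    exact wkey htrans hrinv hm horb β γ hγβ' (g γ) h1 γ (wstabOrbit_self G β γ) h2
  · have hγα' : ¬ r γ α := fun h => hβ (r.trans (r.symm hγβ) h)
    have h1 : g γ ∈ stabOrbit G α γ := wstabOrbit_apply_mem hg hgα (wstabOrbit_self G α γ)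
    have h2 : r (g γ) γ := by
      have := hrinv g hg _ _ hγβ
      rw [hgβ] at this
      exact r.trans this (r.symm hγβ)
    exact wkey htrans hrinv hm horb α γ hγα' (g γ) h1 γ (wstabOrbit_self G α γ) h2

/-- one-point stabilizer sets all have the same size -/
private lemma wSA_card_eq (htrans : IsTransSub G) (α α' : Ω) :
    ({g : Equiv.Perm Ω | g ∈ G ∧ g α = α} : Set (Equiv.Perm Ω)).ncard =
      ({g : Equiv.Perm Ω | g ∈ G ∧ g α' = α'} : Set (Equiv.Perm Ω)).ncard := by
  obtain ⟨g₀, hg₀, hg₀α⟩ := htrans α α'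
  have himg : ({g : Equiv.Perm Ω | g ∈ G ∧ g α' = α'} : Set (Equiv.Perm Ω)) =
      (fun x => g₀ * x * g₀⁻¹) '' {g : Equiv.Perm Ω | g ∈ G ∧ g α = α} := by
    ext x
    simp only [Set.mem_setOf_eq, Set.mem_image]
    constructor
    · rintro ⟨hx, hxα'⟩
      refine ⟨g₀⁻¹ * x * g₀, ⟨G.mul_mem (G.mul_mem (inv_mem hg₀) hx) hg₀, ?_⟩, by group⟩
      have h0 : g₀⁻¹ α' = α := winv_fix hg₀α
      simp [Equiv.Perm.mul_apply, hg₀α, hxα', h0]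
    · rintro ⟨y, ⟨hy, hyα⟩, rfl⟩
      refine ⟨G.mul_mem (G.mul_mem hg₀ hy) (inv_mem hg₀), ?_⟩
      have h0 : g₀⁻¹ α' = α := winv_fix hg₀α
      simp [Equiv.Perm.mul_apply, h0, hyα, hg₀α]
  rw [himg, Set.ncard_image_of_injective]
  intro x y hxy
  simpa using mul_left_cancel (mul_right_cancel hxy)

/-- orbit–stabilizer style counting -/
private lemma wSA_eq_mul (α β : Ω) {m : ℕ}
    (horb : ∀ α β : Ω, β ≠ α → (stabOrbit G α β).ncard = m) (hβα : β ≠ α) :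
    ({g : Equiv.Perm Ω | g ∈ G ∧ g α = α} : Set (Equiv.Perm Ω)).ncard =
      m * ({g : Equiv.Perm Ω | g ∈ G ∧ g α = α ∧ g β = β} : Set (Equiv.Perm Ω)).ncard := by
  classical
  set SA : Set (Equiv.Perm Ω) := {g | g ∈ G ∧ g α = α} with hSAdef
  set SP : Set (Equiv.Perm Ω) := {g | g ∈ G ∧ g α = α ∧ g β = β} with hSPdef
  set f : Equiv.Perm Ω → Ω := fun g => g β with hfdef
  have himg : f '' SA = stabOrbit G α β := by
    ext γ
    simp only [Set.mem_image, hSAdef, Set.mem_setOf_eq, hfdef]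
    constructor
    · rintro ⟨g, ⟨hg, hgα⟩, rfl⟩
      exact ⟨g, hg, hgα, rfl⟩
    · rintro ⟨g, hg, hgα, hgβ⟩
      exact ⟨g, ⟨hg, hgα⟩, hgβ⟩
  have himgcard : (f '' SA).ncard = m := by rw [himg]; exact horb α β hβα
  have := wncard_eq_image_mul f SP.ncard m SA himgcard ?_
  · exact this
  rintro c ⟨g₀, ⟨hg₀, hg₀α⟩, rfl⟩
  have hfib : ({a ∈ SA | f a = f g₀} : Set (Equiv.Perm Ω)) = (fun x => g₀ * x) '' SP := by
    ext x
    simp only [Set.mem_setOf_eq, Set.mem_image, hSAdef, hSPdef, hfdef]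
    constructor
    · rintro ⟨⟨hx, hxα⟩, hxβ⟩
      have h0 : g₀⁻¹ α = α := winv_fix hg₀α
      refine ⟨g₀⁻¹ * x, ⟨G.mul_mem (inv_mem hg₀) hx, ?_, ?_⟩, by group⟩
      · simp [Equiv.Perm.mul_apply, hxα, h0]
      · simp [Equiv.Perm.mul_apply, hxβ]
    · rintro ⟨y, ⟨hy, hyα, hyβ⟩, rfl⟩
      refine ⟨⟨G.mul_mem hg₀ hy, ?_⟩, ?_⟩
      · simp [Equiv.Perm.mul_apply, hyα, hg₀α]
      · simp [Equiv.Perm.mul_apply, hyβ]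
  rw [hfib, Set.ncard_image_of_injective]
  exact fun x y hxy => mul_left_cancel hxy

/-- Same cardinality of all two-point stabilizer sets. -/
private lemma wSpair_card_eq (htrans : IsTransSub G) {m : ℕ} (hm : 1 < m)
    (horb : ∀ α β : Ω, β ≠ α → (stabOrbit G α β).ncard = m)
    (α β α' β' : Ω) (hβα : β ≠ α) (hβα' : β' ≠ α') :
    ({g : Equiv.Perm Ω | g ∈ G ∧ g α = α ∧ g β = β} : Set (Equiv.Perm Ω)).ncard =
      ({g : Equiv.Perm Ω | g ∈ G ∧ g α' = α' ∧ g β' = β'} : Set (Equiv.Perm Ω)).ncard := by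
  have h1 := wSA_eq_mul (G := G) α β horb hβα
  have h2 := wSA_eq_mul (G := G) α' β' horb hβα'
  have h3 := wSA_card_eq htrans α α'
  refine Nat.eq_of_mul_eq_mul_left (by omega : 0 < m) ?_
  rw [← h1, h3, h2]

/-- If `g` fixes two distinct points in the same block, it fixes everything outside the block. -/
private lemma wsameblock_fix (htrans : IsTransSub G) (hrinv : IsGInvariantSetoid G r)
    {m : ℕ} (hm : 1 < m) (horb : ∀ α β : Ω, β ≠ α → (stabOrbit G α β).ncard = m)
    (α β : Ω) (hne : β ≠ α) (hr : r β α) {g : Equiv.Perm Ω} (hg : g ∈ G)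
    (hgα : g α = α) (hgβ : g β = β) : ∀ γ : Ω, ¬ r γ α → g γ = γ := by
  intro γ hγ
  have hγα : γ ≠ α := fun h => hγ (h ▸ r.refl α)
  have hαγ : ¬ r α γ := fun h => hγ (r.symm h)
  have hsub : ({h : Equiv.Perm Ω | h ∈ G ∧ h γ = γ ∧ h α = α} : Set (Equiv.Perm Ω)) ⊆
      {h : Equiv.Perm Ω | h ∈ G ∧ h α = α ∧ h β = β} := by
    rintro h ⟨hh, hhγ, hhα⟩
    refine ⟨hh, hhα, ?_⟩
    exact wfix_blocks htrans hrinv hm horb γ α hαγ hh hhγ hhα β (Or.inr hr)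
  have hcard := wSpair_card_eq htrans hm horb γ α α β (Ne.symm hγα) hne
  have heq := Set.eq_of_subset_of_ncard_le hsub (le_of_eq hcard.symm) (Set.toFinite _)
  have hmem : g ∈ ({h : Equiv.Perm Ω | h ∈ G ∧ h γ = γ ∧ h α = α} : Set (Equiv.Perm Ω)) := by
    rw [heq]
    exact ⟨hg, hgα, hgβ⟩
  exact hmem.2.1

end Main

end WielandtAux

/-- Wielandt: a 3/2-transitive group is either primitive or Frobenius. -/
theorem threeHalvesTrans_primitive_or_frobenius {Ω : Type*} [Fintype Ω]
    (G : Subgroup (Equiv.Perm Ω)) (hG : IsThreeHalvesTrans G) :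
    IsPrimitiveSub G ∨ IsFrobeniusSub G := by
  classical
  obtain ⟨htrans, m, hm, horb⟩ := hG
  by_cases hprim : ∀ r : Setoid Ω, IsGInvariantSetoid G r → r = ⊥ ∨ r = ⊤
  · exact Or.inl ⟨htrans, hprim⟩
  right
  push_neg at hprim
  obtain ⟨r, hrinv, hrbot, hrtop⟩ := hprim
  have hbot' : ∃ a b : Ω, r a b ∧ a ≠ b := by
    by_contra h
    push_neg at h
    refine hrbot (Setoid.ext fun a b => ?_)
    constructor
    · intro hab
      exact h a b hab
    · rintro rfl
      exact r.refl a
  have htop' : ∃ a b : Ω, ¬ r a b := by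
    by_contra h
    push_neg at h
    exact hrtop (Setoid.ext fun a b => ⟨fun _ => trivial, fun _ => h a b⟩)
  -- every point has a distinct blockmate
  have hmate : ∀ γ : Ω, ∃ δ : Ω, δ ≠ γ ∧ r δ γ := by
    obtain ⟨a, b, hab, habne⟩ := hbot'
    intro γ
    obtain ⟨g, hg, hga⟩ := htrans a γ
    refine ⟨g b, fun h => habne ?_, ?_⟩
    · exact (g.injective (by rw [h, hga])).symm
    · have := hrinv g hg a b hab
      rw [hga] at this
      exact r.symm this
  -- every point has a point outside its block
  have hout : ∀ γ : Ω, ∃ δ : Ω, ¬ r δ γ := by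
    obtain ⟨c, d, hcd⟩ := htop'
    intro γ
    obtain ⟨g, hg, hgc⟩ := htrans c γ
    refine ⟨g d, fun h => hcd ?_⟩
    have : r (g c) (g d) := by
      rw [hgc]
      exact r.symm h
    exact winv_invariant hrinv hg this
  refine ⟨htrans, ?_, ?_⟩
  · -- nontrivial point stabilizers
    intro α
    obtain ⟨β, hβne, _⟩ := hmate α
    have h2 : 1 < (stabOrbit G α β).ncard := by
      rw [horb α β hβne]
      exact hm
    obtain ⟨γ, hγ, hγβ⟩ := Set.exists_ne_of_one_lt_ncard h2 β
    obtain ⟨g, hg, hgα, hgβ⟩ := hγ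
    refine ⟨g, hg, fun h1 => hγβ ?_, hgα⟩
    rw [← hgβ, h1]
    rfl
  · -- trivial two-point stabilizers
    have main : ∀ g ∈ G, ∀ α β : Ω, β ≠ α → r β α → g α = α → g β = β → g = 1 := by
      intro g hg α β hne hr hgα hgβ
      have fix1 : ∀ γ : Ω, ¬ r γ α → g γ = γ :=
        wsameblock_fix htrans hrinv hm horb α β hne hr hg hgα hgβ
      obtain ⟨γ₀, hγ₀⟩ := hout α
      obtain ⟨γ₁, hγ₁ne, hγ₁r⟩ := hmate γ₀
      have hγ₁α : ¬ r γ₁ α := fun h => hγ₀ (r.trans (r.symm hγ₁r) h)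
      have fix2 : ∀ δ : Ω, ¬ r δ γ₀ → g δ = δ :=
        wsameblock_fix htrans hrinv hm horb γ₀ γ₁ hγ₁ne hγ₁r hg (fix1 γ₀ hγ₀) (fix1 γ₁ hγ₁α)
      ext x
      show g x = x
      by_cases hx : r x γ₀
      · exact fix1 x (fun h => hγ₀ (r.trans (r.symm hx) h))
      · exact fix2 x hx
    intro g hg α β hne hgα hgβ
    by_cases hr : r β α
    · exact main g hg α β (Ne.symm hne) hr hgα hgβ
    · have fixβ : ∀ γ : Ω, (r γ α ∨ r γ β) → g γ = γ :=
        wfix_blocks htrans hrinv hm horb α β hr hg hgα hgβ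
      obtain ⟨β', hβ'ne, hβ'r⟩ := hmate β
      exact main g hg β β' hβ'ne hβ'r hgβ (fixβ β' (Or.inr hβ'r))
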